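/- Let p ≥ 1 and let F be a square-integrable σ(X) ∨ σ(Z)-measurable random variable such that ∑_{a∈A} D_a F converges in L² and equals p·F almost surely. Then E[F | Z] = 0 almost surely, E[F] = 0, and Var(F) = (1/p) ∑_{a∈A} E[(D_a F)²]. -/

import Mathlib

open MeasureTheory ProbabilityTheory

section Setup

variable {Ω E₀ : Type*} {A : Type*} {E : A → Type*}
variable [MeasurableSpace Ω] [MeasurableSpace E₀] [∀ a, MeasurableSpace (E a)]

/-- The σ-algebra σ(Z) generated by the latent variable `Z`. -/
def sigmaZ (Z : Ω → E₀) : MeasurableSpace Ω :=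
  MeasurableSpace.comap Z inferInstance

/-- The σ-algebra σ(X) generated by the whole family `X`. -/
def sigmaX (X : ∀ a, Ω → E a) : MeasurableSpace Ω :=
  ⨆ a, MeasurableSpace.comap (X a) inferInstance

/-- The σ-algebra σ((X_b)_{b ∈ L}) ∨ σ(Z). -/
def sigmaSub (X : ∀ a, Ω → E a) (Z : Ω → E₀) (L : Finset A) : MeasurableSpace Ω :=
  (⨆ b ∈ L, MeasurableSpace.comap (X b) inferInstance) ⊔ sigmaZ Z

/-- The σ-algebra 𝒢^a = σ((X_b)_{b ≠ a}) ∨ σ(Z). -/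
def Gminus (X : ∀ a, Ω → E a) (Z : Ω → E₀) (a : A) : MeasurableSpace Ω :=
  (⨆ b ≠ a, MeasurableSpace.comap (X b) inferInstance) ⊔ sigmaZ Z

/-- The discrete Malliavin gradient `D_a F = F - E[F | 𝒢^a]`. -/
noncomputable def Dgrad (P : Measure Ω) (X : ∀ a, Ω → E a) (Z : Ω → E₀)
    (a : A) (F : Ω → ℝ) : Ω → ℝ :=
  fun ω => F ω - (P[F | Gminus X Z a]) ω

/-- Conditional independence of the family `X` given `Z`:
`ℙ(X_a ∈ s | 𝒢^a) = ℙ(X_a ∈ s | σ(Z))` a.s. for every `a` and measurable `s`. -/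
def CondIndep (P : Measure Ω) (X : ∀ a, Ω → E a) (Z : Ω → E₀) : Prop :=
  ∀ (a : A) (s : Set (E a)), MeasurableSet s →
    (P[(X a ⁻¹' s).indicator (fun _ => (1 : ℝ)) | Gminus X Z a])
      =ᵐ[P] (P[(X a ⁻¹' s).indicator (fun _ => (1 : ℝ)) | sigmaZ Z])

/-- The random vector `X = (X_a)_{a ∈ A}`. -/
def Xvec (X : ∀ a, Ω → E a) : Ω → ∀ a, E a := fun ω a => X a ω

/-- The difference operator `Δ^a F = f(X) - f(X^{a}, X'_a)`. -/
noncomputable def Delta [DecidableEq A] (X X' : ∀ a, Ω → E a)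
    (f : (∀ a, E a) → ℝ) (a : A) : Ω → ℝ :=
  fun ω => f (Xvec X ω) - f (Function.update (Xvec X ω) a (X' a ω))

/-- The combined family of spaces indexed by `A ⊕ A`. -/
def pairFam (E : A → Type*) : A ⊕ A → Type _ := Sum.elim E E

instance pairFamMS : ∀ s, MeasurableSpace (pairFam E s)
  | .inl a => inferInstanceAs (MeasurableSpace (E a))
  | .inr a => inferInstanceAs (MeasurableSpace (E a))

/-- The combined family `(X, X')` indexed by `A ⊕ A`. -/
def pairX (X X' : ∀ a, Ω → E a) : ∀ s, Ω → pairFam E s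
  | .inl a => X a
  | .inr a => X' a

/-- `X'_a` has the same conditional distribution given `Z` as `X_a`, for each `a`. -/
def SameCondLaw (P : Measure Ω) (X X' : ∀ a, Ω → E a) (Z : Ω → E₀) : Prop :=
  ∀ (a : A) (s : Set (E a)), MeasurableSet s →
    (P[(X a ⁻¹' s).indicator (fun _ => (1 : ℝ)) | sigmaZ Z])
      =ᵐ[P] (P[(X' a ⁻¹' s).indicator (fun _ => (1 : ℝ)) | sigmaZ Z])

/-- The carré du champ operator
`Γ(F,G) = (1/2) ∑_a E[(Δ^a F)(Δ^a G) | σ(X) ∨ σ(Z)]` (finite index set). -/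
noncomputable def Gamma [Fintype A] [DecidableEq A] (P : Measure Ω)
    (X X' : ∀ a, Ω → E a) (Z : Ω → E₀) (f g : (∀ a, E a) → ℝ) : Ω → ℝ :=
  fun ω => (1/2) * ∑ a,
    (P[fun ω' => Delta X X' f a ω' * Delta X X' g a ω' | sigmaX X ⊔ sigmaZ Z]) ω

end Setup

open Filter

set_option maxHeartbeats 1000000

section AuxChaos
variable {α : Type*} {m m0 : MeasurableSpace α} {μ : Measure α}

/-- The conditional expectation of an `L²` function is in `L²` (finite measure case). -/
lemma aux_memℒp_condexp [IsFiniteMeasure μ] (hm : m ≤ m0) {f : α → ℝ} (hf : MemLp f 2 μ) :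
    MemLp (μ[f|m]) 2 μ := by
  haveI : SigmaFinite (μ.trim hm) := by
    have := isFiniteMeasure_trim (μ := μ) hm; infer_instance
  have hgm : AEStronglyMeasurable[m]
      ((condExpL2 ℝ ℝ hm (hf.toLp f) : α →₂[μ] ℝ) : α → ℝ) μ :=
    lpMeas.aestronglyMeasurable _
  have heq : ((condExpL2 ℝ ℝ hm (hf.toLp f) : α →₂[μ] ℝ) : α → ℝ) =ᵐ[μ] μ[f|m] := by
    refine ae_eq_condExp_of_forall_setIntegral_eq hm (hf.integrable one_le_two)
      (fun s hs hμs => ((Lp.memLp _).integrable one_le_two).integrableOn)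
      (fun s hs hμs => ?_) hgm
    rw [integral_condExpL2_eq hm (hf.toLp f) hs hμs.ne]
    exact setIntegral_congr_ae (hm s hs) (hf.coeFn_toLp.mono fun x hx _ => hx)
  exact (Lp.memLp _).ae_eq heq

lemma aux_integrable_mul {f g : α → ℝ} (hf : MemLp f 2 μ) (hg : MemLp g 2 μ) :
    Integrable (fun ω => f ω * g ω) μ := by
  have h : MemLp (f • g) 1 μ :=
    hg.smul hf
  rw [memLp_one_iff_integrable] at h
  exact h

end AuxChaos


/-- a `p`-th chaos element is centered (also conditionally on `Z`)
and its variance equals `(1/p) ∑_a E[(D_a F)²]`. -/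
theorem chaos_variance
    {Ω E₀ : Type*} {A : Type*} {E : A → Type*}
    [MeasurableSpace Ω] [MeasurableSpace E₀] [∀ a, MeasurableSpace (E a)]
    [StandardBorelSpace E₀] [∀ a, StandardBorelSpace (E a)] [Countable A]
    (P : Measure Ω) [IsProbabilityMeasure P]
    (Z : Ω → E₀) (hZ : Measurable Z)
    (X : ∀ a, Ω → E a) (hX : ∀ a, Measurable (X a))
    (hCI : CondIndep P X Z)
    (p : ℕ) (hp : 1 ≤ p)
    (F : Ω → ℝ) (hF : MemLp F 2 P)
    (hFmeas : Measurable[sigmaX X ⊔ sigmaZ Z] F)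
    -- the series `∑_a D_a F` converges in `L²` to `S` ...
    (S : Ω → ℝ) (hS : MemLp S 2 P)
    (hconv : Filter.Tendsto
      (fun s : Finset A => eLpNorm ((∑ a ∈ s, Dgrad P X Z a F) - S) 2 P)
      Filter.atTop (nhds 0))
    -- ... and equals `p • F` almost surely
    (hEigen : S =ᵐ[P] fun ω => (p : ℝ) * F ω) :
    (P[F | sigmaZ Z] =ᵐ[P] 0)
    ∧ (∫ ω, F ω ∂P = 0)
    ∧ variance F P = (1 / (p : ℝ)) * ∑' a, ∫ ω, (Dgrad P X Z a F ω) ^ 2 ∂P := by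
  classical
  have hm : sigmaZ Z ≤ ‹MeasurableSpace Ω› := hZ.comap_le
  have hG : ∀ a, Gminus X Z a ≤ ‹MeasurableSpace Ω› := fun a =>
    sup_le (iSup_le fun b => iSup_le fun _ => (hX b).comap_le) hZ.comap_le
  have hmG : ∀ a, sigmaZ Z ≤ Gminus X Z a := fun _ => le_sup_right
  haveI hsfm : SigmaFinite (P.trim hm) := by
    have := isFiniteMeasure_trim (μ := P) hm; infer_instance
  have hsfG : ∀ a, SigmaFinite (P.trim (hG a)) := fun a => by
    have := isFiniteMeasure_trim (μ := P) (hG a); infer_instance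
  have hFi : Integrable F P := hF.integrable one_le_two
  have hS1 : Integrable S P := hS.integrable one_le_two
  have hC2 : ∀ a, MemLp (P[F|Gminus X Z a]) 2 P := fun a => aux_memℒp_condexp (hG a) hF
  have hD2 : ∀ a, MemLp (Dgrad P X Z a F) 2 P := fun a => hF.sub (hC2 a)
  have hDi : ∀ a, Integrable (Dgrad P X Z a F) P := fun a => (hD2 a).integrable one_le_two
  have hpne : (p : ℝ) ≠ 0 := Nat.cast_ne_zero.mpr (by omega)
  -- D_a F has zero conditional expectation given 𝒢^a
  have hDG : ∀ a, P[Dgrad P X Z a F|Gminus X Z a] =ᵐ[P] 0 := by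
    intro a
    haveI := hsfG a
    have h1 : P[Dgrad P X Z a F|Gminus X Z a] =ᵐ[P]
        P[F|Gminus X Z a] - P[P[F|Gminus X Z a]|Gminus X Z a] :=
      condExp_sub hFi integrable_condExp _
    have h2 : P[P[F|Gminus X Z a]|Gminus X Z a] =ᵐ[P] P[F|Gminus X Z a] :=
      condExp_condExp_of_le le_rfl (hG a)
    filter_upwards [h1, h2] with ω e1 e2
    simp only [Pi.sub_apply] at e1
    simp [e1, e2]
  -- hence also given σ(Z)
  have hDm : ∀ a, P[Dgrad P X Z a F|sigmaZ Z] =ᵐ[P] 0 := by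
    intro a
    haveI := hsfG a
    have h0 : P[Dgrad P X Z a F|sigmaZ Z]
        =ᵐ[P] P[P[Dgrad P X Z a F|Gminus X Z a]|sigmaZ Z] :=
      (condExp_condExp_of_le (hmG a) (hG a)).symm
    have h1 : P[P[Dgrad P X Z a F|Gminus X Z a]|sigmaZ Z] =ᵐ[P] P[(0 : Ω → ℝ)|sigmaZ Z] :=
      condExp_congr_ae (hDG a)
    refine (h0.trans h1).trans ?_
    rw [condExp_zero]
  -- E[S | σ(Z)] = 0
  have hSm : P[S|sigmaZ Z] =ᵐ[P] 0 := by
    have hbound : ∀ s : Finset A, eLpNorm (P[S|sigmaZ Z]) 1 P ≤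
        eLpNorm ((∑ a ∈ s, Dgrad P X Z a F) - S) 2 P := by
      intro s
      have hsum_int : Integrable (∑ a ∈ s, Dgrad P X Z a F) P :=
        integrable_finset_sum' _ fun a _ => hDi a
      have h1 : P[(∑ a ∈ s, Dgrad P X Z a F) - S|sigmaZ Z] =ᵐ[P]
          P[∑ a ∈ s, Dgrad P X Z a F|sigmaZ Z] - P[S|sigmaZ Z] :=
        condExp_sub hsum_int hS1 _
      have h2 : P[∑ a ∈ s, Dgrad P X Z a F|sigmaZ Z] =ᵐ[P] 0 := by
        refine (condExp_finsetSum (fun a _ => hDi a) _).trans ?_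
        have hall : ∀ᵐ ω ∂P, ∀ a ∈ s, (P[Dgrad P X Z a F|sigmaZ Z]) ω = 0 :=
          (ae_ball_iff s.countable_toSet).2 fun a _ => hDm a
        filter_upwards [hall] with ω hω
        simp only [Finset.sum_apply, Pi.zero_apply]
        exact Finset.sum_eq_zero fun a ha => hω a ha
      have h3 : P[S|sigmaZ Z] =ᵐ[P] -(P[(∑ a ∈ s, Dgrad P X Z a F) - S|sigmaZ Z]) := by
        filter_upwards [h1, h2] with ω e1 e2
        simp only [Pi.sub_apply, Pi.neg_apply, Pi.zero_apply] at *
        rw [e1, e2]; ring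
      calc eLpNorm (P[S|sigmaZ Z]) 1 P
          = eLpNorm (P[(∑ a ∈ s, Dgrad P X Z a F) - S|sigmaZ Z]) 1 P := by
            rw [eLpNorm_congr_ae h3, eLpNorm_neg]
        _ ≤ eLpNorm ((∑ a ∈ s, Dgrad P X Z a F) - S) 1 P :=
            eLpNorm_one_condExp_le_eLpNorm _
        _ ≤ eLpNorm ((∑ a ∈ s, Dgrad P X Z a F) - S) 2 P :=
            eLpNorm_le_eLpNorm_of_exponent_le one_le_two
              (hsum_int.sub hS1).aestronglyMeasurable
    have h0 : eLpNorm (P[S|sigmaZ Z]) 1 P = 0 :=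
      le_antisymm (ge_of_tendsto hconv (Eventually.of_forall hbound)) zero_le
    exact (eLpNorm_eq_zero_iff ((stronglyMeasurable_condExp (m := sigmaZ Z)).mono hm).aestronglyMeasurable one_ne_zero).1 h0
  -- E[F | σ(Z)] = 0
  have hFm : P[F|sigmaZ Z] =ᵐ[P] 0 := by
    have h1 : P[S|sigmaZ Z] =ᵐ[P] P[(p : ℝ) • F|sigmaZ Z] := condExp_congr_ae hEigen
    have h2 : P[(p : ℝ) • F|sigmaZ Z] =ᵐ[P] (p : ℝ) • P[F|sigmaZ Z] :=
      condExp_smul (p : ℝ) F _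
    filter_upwards [(h1.trans h2).symm.trans hSm] with ω hω
    simp only [Pi.smul_apply, smul_eq_mul, Pi.zero_apply] at hω ⊢
    exact (mul_eq_zero.1 hω).resolve_left hpne
  have hInt0 : ∫ ω, F ω ∂P = 0 := by
    rw [← integral_condExp hm (f := F), integral_congr_ae hFm]
    simp
  -- per-index identity : ∫ F · D_a F = ∫ (D_a F)²
  have hterm : ∀ a, ∫ ω, F ω * Dgrad P X Z a F ω ∂P = ∫ ω, (Dgrad P X Z a F ω) ^ 2 ∂P := by
    intro a
    haveI := hsfG a
    have hgD : Integrable (fun ω => (P[F|Gminus X Z a]) ω * Dgrad P X Z a F ω) P :=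
      aux_integrable_mul (hC2 a) (hD2 a)
    have hpull : P[(P[F|Gminus X Z a]) * Dgrad P X Z a F|Gminus X Z a]
        =ᵐ[P] (P[F|Gminus X Z a]) * P[Dgrad P X Z a F|Gminus X Z a] :=
      condExp_mul_of_stronglyMeasurable_left stronglyMeasurable_condExp hgD (hDi a)
    have h1 : P[(P[F|Gminus X Z a]) * Dgrad P X Z a F|Gminus X Z a] =ᵐ[P] 0 := by
      filter_upwards [hpull, hDG a] with ω e1 e2
      simp only [Pi.mul_apply, Pi.zero_apply] at *
      rw [e1, e2, mul_zero]
    have hzero : ∫ ω, (P[F|Gminus X Z a]) ω * Dgrad P X Z a F ω ∂P = 0 := by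
      have h2 : ∫ ω, ((P[F|Gminus X Z a]) * Dgrad P X Z a F) ω ∂P = 0 := by
        rw [← integral_condExp (hG a), integral_congr_ae h1]
        simp
      simpa only [Pi.mul_apply] using h2
    have hDD : Integrable (fun ω => (Dgrad P X Z a F ω) ^ 2) P := (hD2 a).integrable_sq
    calc ∫ ω, F ω * Dgrad P X Z a F ω ∂P
        = ∫ ω, ((Dgrad P X Z a F ω) ^ 2 + (P[F|Gminus X Z a]) ω * Dgrad P X Z a F ω) ∂P := by
          refine integral_congr_ae (Eventually.of_forall fun ω => ?_)
          simp only [Dgrad]; ring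
      _ = ∫ ω, (Dgrad P X Z a F ω) ^ 2 ∂P
            + ∫ ω, (P[F|Gminus X Z a]) ω * Dgrad P X Z a F ω ∂P :=
          integral_add hDD hgD
      _ = ∫ ω, (Dgrad P X Z a F ω) ^ 2 ∂P := by rw [hzero, add_zero]
  have hsum2 : ∀ s : Finset A, MemLp (∑ a ∈ s, Dgrad P X Z a F) 2 P :=
    fun s => memLp_finsetSum' s fun a _ => hD2 a
  have hsum_eq : ∀ s : Finset A,
      ∫ ω, F ω * (∑ a ∈ s, Dgrad P X Z a F) ω ∂P
        = ∑ a ∈ s, ∫ ω, (Dgrad P X Z a F ω) ^ 2 ∂P := by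
    intro s
    have h1 : ∫ ω, F ω * (∑ a ∈ s, Dgrad P X Z a F) ω ∂P
        = ∫ ω, ∑ a ∈ s, F ω * Dgrad P X Z a F ω ∂P := by
      refine integral_congr_ae (Eventually.of_forall fun ω => ?_)
      simp only [Finset.sum_apply, Finset.mul_sum]
    rw [h1, integral_finset_sum s fun a _ => aux_integrable_mul hF (hD2 a)]
    exact Finset.sum_congr rfl fun a _ => hterm a
  have hFS : Integrable (fun ω => F ω * S ω) P := aux_integrable_mul hF hS
  have htend : Filter.Tendsto (fun s : Finset A => ∫ ω, F ω * (∑ a ∈ s, Dgrad P X Z a F) ω ∂P)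
      Filter.atTop (nhds (∫ ω, F ω * S ω ∂P)) := by
    rw [tendsto_iff_norm_sub_tendsto_zero]
    have hb : ∀ s : Finset A,
        ‖∫ ω, F ω * (∑ a ∈ s, Dgrad P X Z a F) ω ∂P - ∫ ω, F ω * S ω ∂P‖
        ≤ (eLpNorm F 2 P * eLpNorm ((∑ a ∈ s, Dgrad P X Z a F) - S) 2 P).toReal := by
      intro s
      have hd2 : MemLp ((∑ a ∈ s, Dgrad P X Z a F) - S) 2 P := (hsum2 s).sub hS
      have hint : Integrable (fun ω => F ω * ((∑ a ∈ s, Dgrad P X Z a F) ω - S ω)) P :=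
        aux_integrable_mul hF hd2
      have heq : ∫ ω, F ω * (∑ a ∈ s, Dgrad P X Z a F) ω ∂P - ∫ ω, F ω * S ω ∂P
          = ∫ ω, F ω * ((∑ a ∈ s, Dgrad P X Z a F) ω - S ω) ∂P := by
        rw [← integral_sub (aux_integrable_mul hF (hsum2 s)) hFS]
        refine integral_congr_ae (Eventually.of_forall fun ω => ?_)
        ring
      rw [heq]
      have h1 : ‖∫ ω, F ω * ((∑ a ∈ s, Dgrad P X Z a F) ω - S ω) ∂P‖
          ≤ (eLpNorm (fun ω => F ω * ((∑ a ∈ s, Dgrad P X Z a F) ω - S ω)) 1 P).toReal := by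
        rw [eLpNorm_one_eq_lintegral_enorm,
          ← integral_norm_eq_lintegral_enorm hint.aestronglyMeasurable]
        exact norm_integral_le_integral_norm _
      have h2a : eLpNorm (F • ((∑ a ∈ s, Dgrad P X Z a F) - S)) 1 P
          ≤ eLpNorm F 2 P * eLpNorm ((∑ a ∈ s, Dgrad P X Z a F) - S) 2 P :=
        eLpNorm_smul_le_mul_eLpNorm hd2.aestronglyMeasurable hF.aestronglyMeasurable
      have h2b : eLpNorm (fun ω => F ω * ((∑ a ∈ s, Dgrad P X Z a F) ω - S ω)) 1 P
          = eLpNorm (F • ((∑ a ∈ s, Dgrad P X Z a F) - S)) 1 P :=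
        eLpNorm_congr_ae (Eventually.of_forall fun ω => by
          simp [Pi.smul_apply, Pi.sub_apply, smul_eq_mul])
      have h2 : eLpNorm (fun ω => F ω * ((∑ a ∈ s, Dgrad P X Z a F) ω - S ω)) 1 P
          ≤ eLpNorm F 2 P * eLpNorm ((∑ a ∈ s, Dgrad P X Z a F) - S) 2 P := h2b ▸ h2a
      exact h1.trans (ENNReal.toReal_mono
        (ENNReal.mul_ne_top hF.eLpNorm_ne_top hd2.eLpNorm_ne_top) h2)
    have h1 : Filter.Tendsto (fun s : Finset A =>
        eLpNorm F 2 P * eLpNorm ((∑ a ∈ s, Dgrad P X Z a F) - S) 2 P)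
        Filter.atTop (nhds 0) := by
      have := ENNReal.Tendsto.const_mul hconv (Or.inr hF.eLpNorm_ne_top)
      simpa using this
    have h0 := (ENNReal.tendsto_toReal (by simp : (0 : ENNReal) ≠ ⊤)).comp h1
    simp only [Function.comp_def, ENNReal.toReal_zero] at h0
    exact squeeze_zero (fun s => norm_nonneg _) hb h0
  have hHasSum : HasSum (fun a => ∫ ω, (Dgrad P X Z a F ω) ^ 2 ∂P) (∫ ω, F ω * S ω ∂P) := by
    have heq : (fun s : Finset A => ∑ a ∈ s, ∫ ω, (Dgrad P X Z a F ω) ^ 2 ∂P)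
        = fun s => ∫ ω, F ω * (∑ a ∈ s, Dgrad P X Z a F) ω ∂P := by
      funext s; exact (hsum_eq s).symm
    rw [HasSum, heq]
    exact htend
  have hFS_eq : ∫ ω, F ω * S ω ∂P = (p : ℝ) * ∫ ω, F ω ^ 2 ∂P := by
    have h1 : ∀ᵐ ω ∂P, F ω * S ω = (p : ℝ) * F ω ^ 2 := by
      filter_upwards [hEigen] with ω h
      rw [h]; ring
    rw [integral_congr_ae h1, integral_const_mul]
  refine ⟨hFm, hInt0, ?_⟩
  rw [variance_eq_sub hF, hHasSum.tsum_eq, hFS_eq]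
  have hsq : ∫ ω, (F ^ 2) ω ∂P = ∫ ω, F ω ^ 2 ∂P := rfl
  rw [hsq, hInt0]
  field_simp
  simp
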